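/- Let Δ be reducible into components Δ|_{V₁} and Δ|_{V₂} along a complete separator. If F₁ ⊆ I_{V₁} and F₂ ⊆ I_{V₂} are facial sets with respect to Δ|_{V₁} and Δ|_{V₂}, then π_{V₁}^{-1}(F₁) ∩ π_{V₂}^{-1}(F₂) is a facial set with respect to Δ. Consequently, for any T ⊆ I, F_Δ(T) = π_{V₁}^{-1}(F_{Δ|_{V₁}}(π_{V₁}(T))) ∩ π_{V₂}^{-1}(F_{Δ|_{V₂}}(π_{V₂}(T))). -/

import Mathlib

set_option linter.unusedSectionVars false
set_option maxHeartbeats 1000000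


/-- The pairing `⟨g, f_i⟩` with the design-matrix column `f_i` of the hierarchical model
of `Δ`: the entry of `f_i` at row `(D, x)` is `1` iff `D ∈ Δ` and `i` agrees with `x`
on `D`. -/
def hdot {V : Type} [Fintype V] [DecidableEq V] {ι : V → Type} [∀ v, Fintype (ι v)]
    [∀ v, DecidableEq (ι v)] (Δ : Finset (Finset V))
    (g : Finset V × (∀ v, ι v) → ℝ) (i : ∀ v, ι v) : ℝ :=
  ∑ p : Finset V × (∀ v, ι v),
    g p * (if p.1 ∈ Δ ∧ ∀ v ∈ p.1, i v = p.2 v then 1 else 0)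

/-- `F` is a facial set of the marginal polytope of `Δ`. -/
def HFacial {V : Type} [Fintype V] [DecidableEq V] {ι : V → Type} [∀ v, Fintype (ι v)]
    [∀ v, DecidableEq (ι v)] (Δ : Finset (Finset V)) (F : Set (∀ v, ι v)) : Prop :=
  ∃ (g : Finset V × (∀ v, ι v) → ℝ) (c : ℝ),
    (∀ i, c ≤ hdot Δ g i) ∧ ∀ i, i ∈ F ↔ hdot Δ g i = c

/-- `F` is the smallest facial set of `Δ` containing `T`. -/
def HSmallest {V : Type} [Fintype V] [DecidableEq V] {ι : V → Type} [∀ v, Fintype (ι v)]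
    [∀ v, DecidableEq (ι v)] (Δ : Finset (Finset V)) (T F : Set (∀ v, ι v)) : Prop :=
  HFacial Δ F ∧ T ⊆ F ∧ ∀ F', HFacial Δ F' → T ⊆ F' → F ⊆ F'

/-- The induced subcomplex `Δ|_{V'}`, as a simplicial complex on the vertex set `V'`. -/
def hinduced {V : Type} [DecidableEq V] (Δ : Finset (Finset V)) (V' : Finset V) :
    Finset (Finset {v // v ∈ V'}) :=
  (Δ.filter (· ⊆ V')).image (Finset.subtype (· ∈ V'))

/-- The coordinate projection `π_{V'} : I → I_{V'}`. -/
def hproj {V : Type} {ι : V → Type} (V' : Finset V) (i : ∀ v, ι v) :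
    ∀ v' : {v // v ∈ V'}, ι v'.1 :=
  fun v' => i v'.1

section Helpers
variable {V : Type} [Fintype V] [DecidableEq V] {ι : V → Type} [∀ v, Fintype (ι v)]
  [∀ v, DecidableEq (ι v)]

def hext (V' : Finset V) (d : ∀ v, ι v) (x : ∀ v' : {v // v ∈ V'}, ι v'.1) : ∀ v, ι v :=
  fun v => if h : v ∈ V' then x ⟨v, h⟩ else d v

lemma hproj_hext (V' : Finset V) (d : ∀ v, ι v) (x : ∀ v' : {v // v ∈ V'}, ι v'.1) :
    hproj V' (hext V' d x) = x := by
  funext v'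
  obtain ⟨v, hv⟩ := v'
  simp [hproj, hext, hv]

lemma mem_hinduced_iff (Δ : Finset (Finset V)) (V' : Finset V) (D' : Finset {v // v ∈ V'}) :
    D' ∈ hinduced Δ V' ↔ D'.map (Function.Embedding.subtype (· ∈ V')) ∈ Δ := by
  constructor
  · intro h
    rw [hinduced, Finset.mem_image] at h
    obtain ⟨D, hD, rfl⟩ := h
    rw [Finset.mem_filter] at hD
    rw [Finset.subtype_map, Finset.filter_true_of_mem (fun x hx => hD.2 hx)]
    exact hD.1
  · intro h
    rw [hinduced, Finset.mem_image]
    refine ⟨D'.map _, Finset.mem_filter.2 ⟨h, ?_⟩, ?_⟩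
    · intro v hv
      rw [Finset.mem_map] at hv
      obtain ⟨v', _, rfl⟩ := hv
      exact v'.2
    · ext v'
      simp only [Finset.mem_subtype, Finset.mem_map, Function.Embedding.coe_subtype]
      constructor
      · rintro ⟨a, ha, hav⟩
        rwa [show a = v' from Subtype.coe_injective hav] at ha
      · intro h'
        exact ⟨v', h', rfl⟩

lemma sum_push {α β : Type*} [Fintype α] [Fintype β] [DecidableEq β] (f : α → β)
    (u : α → ℝ) (w : β → ℝ) :
    (∑ b, (∑ a, if f a = b then u a else 0) * w b) = ∑ a, u a * w (f a) := by
  simp only [Finset.sum_mul, ite_mul, zero_mul]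
  rw [Finset.sum_comm]
  refine Finset.sum_congr rfl fun a _ => ?_
  simp [Finset.sum_ite_eq]

lemma lift_exists (Δ : Finset (Finset V)) (V' : Finset V) (d : ∀ v, ι v)
    (g₁ : Finset {v // v ∈ V'} × (∀ v' : {v // v ∈ V'}, ι v'.1) → ℝ) :
    ∃ g : Finset V × (∀ v, ι v) → ℝ,
      ∀ i, hdot Δ g i = hdot (hinduced Δ V') g₁ (hproj V' i) := by
  classical
  set e : Finset {v // v ∈ V'} × (∀ v' : {v // v ∈ V'}, ι v'.1) → Finset V × (∀ v, ι v) :=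
    fun p' => (p'.1.map (Function.Embedding.subtype (· ∈ V')), hext V' d p'.2) with he
  refine ⟨fun p => ∑ p', if e p' = p then g₁ p' else 0, fun i => ?_⟩
  rw [hdot, sum_push e g₁ (fun p => if p.1 ∈ Δ ∧ ∀ v ∈ p.1, i v = p.2 v then 1 else 0)]
  rw [hdot]
  refine Finset.sum_congr rfl fun p' _ => ?_
  congr 1
  rw [he]
  refine if_congr (and_congr ?_ ?_) rfl rfl
  · exact (mem_hinduced_iff Δ V' p'.1).symm
  · constructor
    · intro h v' hv'
      have h2 := h v'.1 (Finset.mem_map.2 ⟨v', hv', rfl⟩)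
      obtain ⟨v, hv⟩ := v'
      simpa [hproj, hext, hv] using h2
    · intro h v hv
      rw [Finset.mem_map] at hv
      obtain ⟨v', hv', rfl⟩ := hv
      have h2 := h v' hv'
      obtain ⟨w, hw⟩ := v'
      simpa [hproj, hext, hw] using h2


lemma hdot_add (Δ : Finset (Finset V)) (g g' : Finset V × (∀ v, ι v) → ℝ) (i : ∀ v, ι v) :
    hdot Δ (g + g') i = hdot Δ g i + hdot Δ g' i := by
  rw [hdot, hdot, hdot, ← Finset.sum_add_distrib]
  refine Finset.sum_congr rfl fun p _ => ?_
  show (g p + g' p) * _ = _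
  split <;> simp

/-- conditional minimum of B over configurations agreeing with i on S -/
def condMinB (S : Finset V) (B : (∀ v, ι v) → ℝ) (i : ∀ v, ι v) : ℝ :=
  (Finset.univ.filter (fun k => ∀ v ∈ S, k v = i v)).inf' ⟨i, by simp⟩ B

lemma condMinB_le (S : Finset V) (B : (∀ v, ι v) → ℝ) (i : ∀ v, ι v) :
    condMinB S B i ≤ B i :=
  Finset.inf'_le B (by simp)

lemma condMinB_congr (S : Finset V) (B : (∀ v, ι v) → ℝ) (i i' : ∀ v, ι v)
    (h : ∀ v ∈ S, i v = i' v) : condMinB S B i = condMinB S B i' := by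
  rw [condMinB, condMinB]
  apply Finset.inf'_congr
  · ext k
    simp only [Finset.mem_filter, Finset.mem_univ, true_and]
    constructor
    · intro hk v hv; rw [hk v hv, h v hv]
    · intro hk v hv; rw [hk v hv, h v hv]
  · intro a _; rfl

lemma condMinB_attained (S : Finset V) (B : (∀ v, ι v) → ℝ) (i : ∀ v, ι v) :
    ∃ k, (∀ v ∈ S, k v = i v) ∧ B k = condMinB S B i := by
  obtain ⟨k, hk, hk2⟩ := Finset.exists_mem_eq_inf'
    (⟨i, by simp⟩ : (Finset.univ.filter (fun k => ∀ v ∈ S, k v = i v)).Nonempty) B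
  rw [Finset.mem_filter] at hk
  exact ⟨k, hk.2, hk2.symm⟩


lemma hdot_decomp (Δ : Finset (Finset V)) (W₁ W₂ : Finset V)
    (hsplit : Δ = Δ.filter (· ⊆ W₁) ∪ Δ.filter (· ⊆ W₂))
    (g : Finset V × (∀ v, ι v) → ℝ) :
    ∃ A B : (∀ v, ι v) → ℝ,
      (∀ i, hdot Δ g i = A i + B i) ∧
      (∀ i i', (∀ v ∈ W₁, i v = i' v) → A i = A i') ∧
      (∀ i i', (∀ v ∈ W₂, i v = i' v) → B i = B i') ∧
      (∃ gA : Finset {v // v ∈ W₁} × (∀ v' : {v // v ∈ W₁}, ι v'.1) → ℝ,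
        ∀ i, hdot (hinduced Δ W₁) gA (hproj W₁ i) = A i) := by
  classical
  have hW₂ : ∀ D ∈ Δ, ¬ D ⊆ W₁ → D ⊆ W₂ := by
    intro D hD hns
    rw [hsplit, Finset.mem_union, Finset.mem_filter, Finset.mem_filter] at hD
    rcases hD with h | h
    · exact absurd h.2 hns
    · exact h.2
  refine ⟨fun i => ∑ p : Finset V × (∀ v, ι v),
      g p * (if p.1 ∈ Δ ∧ p.1 ⊆ W₁ ∧ ∀ v ∈ p.1, i v = p.2 v then 1 else 0),
    fun i => ∑ p : Finset V × (∀ v, ι v),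
      g p * (if p.1 ∈ Δ ∧ ¬ p.1 ⊆ W₁ ∧ ∀ v ∈ p.1, i v = p.2 v then 1 else 0),
    ?_, ?_, ?_, ?_⟩
  · intro i
    rw [hdot, ← Finset.sum_add_distrib]
    refine Finset.sum_congr rfl fun p _ => ?_
    rw [← mul_add]
    congr 1
    by_cases h2 : p.1 ∈ Δ ∧ ∀ v ∈ p.1, i v = p.2 v
    · by_cases h1 : p.1 ⊆ W₁ <;> simp [h1, h2.1, h2.2]
    · have hx : ¬(p.1 ∈ Δ ∧ p.1 ⊆ W₁ ∧ ∀ v ∈ p.1, i v = p.2 v) := by tauto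
      have hy : ¬(p.1 ∈ Δ ∧ ¬ p.1 ⊆ W₁ ∧ ∀ v ∈ p.1, i v = p.2 v) := by tauto
      simp [h2, hx, hy]
  · intro i i' h
    refine Finset.sum_congr rfl fun p _ => ?_
    congr 1
    refine if_congr (and_congr_right fun _ => and_congr_right fun hs => ?_) rfl rfl
    exact ⟨fun ha v hv => by rw [← h v (hs hv)]; exact ha v hv,
           fun ha v hv => by rw [h v (hs hv)]; exact ha v hv⟩
  · intro i i' h
    refine Finset.sum_congr rfl fun p _ => ?_
    congr 1
    refine if_congr (and_congr_right fun hm => and_congr_right fun hs => ?_) rfl rfl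
    have hsub := hW₂ p.1 hm hs
    exact ⟨fun ha v hv => by rw [← h v (hsub hv)]; exact ha v hv,
           fun ha v hv => by rw [h v (hsub hv)]; exact ha v hv⟩
  · set f : Finset V × (∀ v, ι v) → Finset {v // v ∈ W₁} × (∀ v' : {v // v ∈ W₁}, ι v'.1) :=
      fun p => (p.1.subtype (· ∈ W₁), hproj W₁ p.2) with hf
    refine ⟨fun p' => ∑ p, if f p = p' then (if p.1 ⊆ W₁ then g p else 0) else 0, fun i => ?_⟩
    rw [hdot, sum_push f _ (fun p' => if p'.1 ∈ hinduced Δ W₁ ∧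
      ∀ v' ∈ p'.1, hproj W₁ i v' = p'.2 v' then 1 else 0)]
    refine Finset.sum_congr rfl fun p _ => ?_
    by_cases h1 : p.1 ⊆ W₁
    · rw [if_pos h1]
      congr 1
      have hmap : (p.1.subtype (· ∈ W₁)).map (Function.Embedding.subtype (· ∈ W₁)) = p.1 := by
        rw [Finset.subtype_map, Finset.filter_true_of_mem (fun x hx => h1 hx)]
      refine if_congr (and_congr ?_ ?_) rfl rfl
      · rw [mem_hinduced_iff, hmap]
      · constructor
        · intro ha
          refine ⟨h1, fun v hv => ?_⟩
          simpa [hproj, hf] using ha ⟨v, h1 hv⟩ (Finset.mem_subtype.2 hv)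
        · rintro ⟨-, ha⟩ v' hv'
          rw [Finset.mem_subtype] at hv'
          simpa [hproj, hf] using ha v'.1 hv'
    · rw [if_neg h1, zero_mul]
      rw [if_neg (by tauto), mul_zero]

lemma face_rep (Δ : Finset (Finset V)) (S : Finset V) (hS : S ∈ Δ) (d : ∀ v, ι v)
    (Ψ : (∀ v, ι v) → ℝ) (hΨ : ∀ i i', (∀ v ∈ S, i v = i' v) → Ψ i = Ψ i') :
    ∃ gψ : Finset V × (∀ v, ι v) → ℝ, ∀ i, hdot Δ gψ i = Ψ i := by
  classical
  set E : (∀ v, ι v) → (∀ v, ι v) := fun i v => if v ∈ S then i v else d v with hE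
  have hEagree : ∀ i, ∀ v ∈ S, E i v = i v := fun i v hv => by simp [hE, hv]
  have hEidem : ∀ i, E (E i) = E i := by
    intro i; funext v; by_cases hv : v ∈ S <;> simp [hE, hv]
  refine ⟨fun p => if p.1 = S ∧ p.2 = E p.2 then Ψ p.2 else 0, fun i => ?_⟩
  rw [hdot]
  rw [Finset.sum_eq_single ((S, E i) : Finset V × (∀ v, ι v))]
  · rw [if_pos ⟨rfl, (hEidem i).symm⟩, if_pos ⟨hS, fun v hv => (hEagree i v hv).symm⟩,
      mul_one]
    exact hΨ (E i) i (hEagree i)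
  · intro p _ hne
    by_cases h1 : p.1 = S ∧ p.2 = E p.2
    · rw [if_pos h1]
      by_cases h2 : p.1 ∈ Δ ∧ ∀ v ∈ p.1, i v = p.2 v
      · exfalso
        apply hne
        have hp2 : p.2 = E i := by
          rw [h1.2]
          funext v
          by_cases hv : v ∈ S
          · simp only [hE, if_pos hv]
            exact (h2.2 v (h1.1 ▸ hv)).symm
          · simp [hE, hv]
        exact Prod.ext h1.1 hp2
      · rw [if_neg h2, mul_zero]
    · rw [if_neg h1, zero_mul]
  · intro h
    exact absurd (Finset.mem_univ _) h

lemma glue_mem (Δ : Finset (Finset V)) (W₁ W₂ : Finset V)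
    (hsplit : Δ = Δ.filter (· ⊆ W₁) ∪ Δ.filter (· ⊆ W₂))
    (F : Set (∀ v, ι v)) (hF : HFacial Δ F) (j k : ∀ v, ι v)
    (hj : j ∈ F) (hk : k ∈ F) (hagree : ∀ v ∈ W₁, v ∈ W₂ → j v = k v) :
    (fun v => if v ∈ W₁ then j v else k v) ∈ F := by
  obtain ⟨g, c, hge, hiff⟩ := hF
  obtain ⟨A, B, hAB, hAloc, hBloc, -⟩ := hdot_decomp Δ W₁ W₂ hsplit g
  set l : ∀ v, ι v := fun v => if v ∈ W₁ then j v else k v with hl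
  set m : ∀ v, ι v := fun v => if v ∈ W₁ then k v else j v with hm
  have hlA : A l = A j := hAloc l j (fun v hv => by simp [hl, hv])
  have hlB : B l = B k := hBloc l k (fun v hv => by
    by_cases h1 : v ∈ W₁
    · simp only [hl, if_pos h1]
      exact hagree v h1 hv
    · simp [hl, h1])
  have hmA : A m = A k := hAloc m k (fun v hv => by simp [hm, hv])
  have hmB : B m = B j := hBloc m j (fun v hv => by
    by_cases h1 : v ∈ W₁
    · simp only [hm, if_pos h1]
      exact (hagree v h1 hv).symm
    · simp [hm, h1])
  have hjc : hdot Δ g j = c := (hiff j).1 hj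
  have hkc : hdot Δ g k = c := (hiff k).1 hk
  have hsum : hdot Δ g l + hdot Δ g m = 2 * c := by
    rw [hAB, hAB, hlA, hlB, hmA, hmB]
    have := hAB j; have := hAB k
    linarith
  have hlc : hdot Δ g l = c := by
    have h1 := hge l; have h2 := hge m; linarith
  exact (hiff l).2 hlc

lemma hfacial_preimage_inter (Δ : Finset (Finset V)) (V₁ V₂ : Finset V)
    (F₁ : Set (∀ v' : {v // v ∈ V₁}, ι v'.1)) (F₂ : Set (∀ v' : {v // v ∈ V₂}, ι v'.1))
    (h1 : HFacial (hinduced Δ V₁) F₁) (h2 : HFacial (hinduced Δ V₂) F₂) :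
    HFacial Δ (hproj V₁ ⁻¹' F₁ ∩ hproj V₂ ⁻¹' F₂) := by
  classical
  by_cases hne : Nonempty (∀ v, ι v)
  · obtain ⟨d⟩ := hne
    obtain ⟨g₁, c₁, hge₁, hiff₁⟩ := h1
    obtain ⟨g₂, c₂, hge₂, hiff₂⟩ := h2
    obtain ⟨gA, hgA⟩ := lift_exists Δ V₁ d g₁
    obtain ⟨gB, hgB⟩ := lift_exists Δ V₂ d g₂
    refine ⟨gA + gB, c₁ + c₂, fun i => ?_, fun i => ?_⟩
    · rw [hdot_add, hgA, hgB]
      exact add_le_add (hge₁ _) (hge₂ _)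
    · rw [Set.mem_inter_iff, Set.mem_preimage, Set.mem_preimage, hdot_add, hgA, hgB]
      constructor
      · rintro ⟨hi1, hi2⟩
        rw [(hiff₁ _).1 hi1, (hiff₂ _).1 hi2]
      · intro h
        have b1 := hge₁ (hproj V₁ i)
        have b2 := hge₂ (hproj V₂ i)
        exact ⟨(hiff₁ _).2 (by linarith), (hiff₂ _).2 (by linarith)⟩
  · exact ⟨0, 0, fun i => absurd ⟨i⟩ hne, fun i => absurd ⟨i⟩ hne⟩

lemma proj_facial (Δ : Finset (Finset V)) (W₁ W₂ : Finset V)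
    (hsplit : Δ = Δ.filter (· ⊆ W₁) ∪ Δ.filter (· ⊆ W₂))
    (hcomplete : W₁ ∩ W₂ ∈ Δ)
    (hne : Nonempty (∀ v, ι v))
    (F : Set (∀ v, ι v)) (hF : HFacial Δ F) :
    HFacial (hinduced Δ W₁) (hproj W₁ '' F) := by
  classical
  obtain ⟨d⟩ := hne
  obtain ⟨g, c, hge, hiff⟩ := hF
  obtain ⟨A, B, hAB, hAloc, hBloc, gA, hgA⟩ := hdot_decomp Δ W₁ W₂ hsplit g
  set S : Finset V := W₁ ∩ W₂ with hSdef
  have hSW₁ : S ⊆ W₁ := Finset.inter_subset_left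
  have hA'loc : ∀ i i', (∀ v ∈ W₁, i v = i' v) →
      A i + condMinB S B i = A i' + condMinB S B i' := by
    intro i i' h
    rw [hAloc i i' h, condMinB_congr S B i i' (fun v hv => h v (hSW₁ hv))]
  have hB'nonneg : ∀ i, 0 ≤ B i - condMinB S B i :=
    fun i => sub_nonneg.2 (condMinB_le S B i)
  have hattain : ∀ i : ∀ v, ι v, ∃ k : ∀ v, ι v, (∀ v ∈ S, k v = i v) ∧ B k - condMinB S B k = 0 := by
    intro i
    obtain ⟨k, hk1, hk2⟩ := condMinB_attained S B i
    refine ⟨k, hk1, ?_⟩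
    rw [condMinB_congr S B k i hk1, hk2]
    exact sub_self _
  have hsum' : ∀ i, hdot Δ g i = (A i + condMinB S B i) + (B i - condMinB S B i) :=
    fun i => by rw [hAB]; ring
  set glue : (∀ v, ι v) → (∀ v, ι v) → (∀ v, ι v) :=
    fun a b v => if v ∈ W₁ then a v else b v with hglue
  have hglueA : ∀ a b, A (glue a b) + condMinB S B (glue a b) = A a + condMinB S B a :=
    fun a b => hA'loc _ _ (fun v hv => by simp [hglue, hv])
  have hglueB : ∀ a b, (∀ v ∈ S, a v = b v) →
      B (glue a b) - condMinB S B (glue a b) = B b - condMinB S B b := by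
    intro a b hab
    have hloc : ∀ v ∈ W₂, glue a b v = b v := by
      intro v hv
      by_cases h1 : v ∈ W₁
      · simp only [hglue, if_pos h1]
        exact hab v (Finset.mem_inter.2 ⟨h1, hv⟩)
      · simp [hglue, h1]
    rw [hBloc _ _ hloc, condMinB_congr S B _ _ (fun v hv => hloc v (Finset.inter_subset_right hv))]
  have hA'lb : ∀ i, c ≤ A i + condMinB S B i := by
    intro i
    obtain ⟨k, hk1, hk2⟩ := hattain i
    have h1 : hdot Δ g (glue i k) = (A i + condMinB S B i) + (B k - condMinB S B k) := by
      rw [hsum', hglueA, hglueB i k (fun v hv => (hk1 v hv).symm)]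
    have h2 := hge (glue i k)
    rw [h1, hk2, add_zero] at h2
    exact h2
  have hS' : S.subtype (· ∈ W₁) ∈ hinduced Δ W₁ := by
    rw [mem_hinduced_iff, Finset.subtype_map, Finset.filter_true_of_mem (fun x hx => hSW₁ hx)]
    exact hcomplete
  obtain ⟨gψ, hgψ⟩ := face_rep (hinduced Δ W₁) (S.subtype (· ∈ W₁)) hS' (hproj W₁ d)
    (fun j => condMinB S B (hext W₁ d j)) (by
      intro j j' h
      apply condMinB_congr
      intro v hv
      have hvW : v ∈ W₁ := hSW₁ hv
      show hext W₁ d j v = hext W₁ d j' v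
      simp only [hext, dif_pos hvW]
      exact h ⟨v, hvW⟩ (Finset.mem_subtype.2 hv))
  have key : ∀ j, hdot (hinduced Δ W₁) (gA + gψ) j
      = A (hext W₁ d j) + condMinB S B (hext W₁ d j) := by
    intro j
    have h1 : hdot (hinduced Δ W₁) gA j = A (hext W₁ d j) := by
      have := hgA (hext W₁ d j)
      rwa [hproj_hext] at this
    rw [hdot_add, h1, hgψ]
  refine ⟨gA + gψ, c, fun j => by rw [key]; exact hA'lb _, fun j => ?_⟩
  rw [key]
  constructor
  · rintro ⟨i, hiF, rfl⟩
    have hc := (hiff i).1 hiF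
    rw [hsum'] at hc
    have h1 := hA'lb i
    have h2 := hB'nonneg i
    have h3 : A (hext W₁ d (hproj W₁ i)) + condMinB S B (hext W₁ d (hproj W₁ i))
        = A i + condMinB S B i :=
      hA'loc _ _ (fun v hv => by simp [hext, hproj, hv])
    rw [h3]
    linarith
  · intro hc
    obtain ⟨k, hk1, hk2⟩ := hattain (hext W₁ d j)
    have hlF : glue (hext W₁ d j) k ∈ F := by
      apply (hiff _).2
      rw [hsum', hglueA, hglueB _ _ (fun v hv => (hk1 v hv).symm), hc, hk2, add_zero]
    refine ⟨glue (hext W₁ d j) k, hlF, ?_⟩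
    funext v'
    obtain ⟨v, hv⟩ := v'
    show (if v ∈ W₁ then hext W₁ d j v else k v) = j ⟨v, hv⟩
    simp [hext, hv]

end Helpers

/-- Let `Δ` be reducible into components `Δ|_{V₁}`, `Δ|_{V₂}` along a
complete separator. If `F₁`, `F₂` are facial sets for `Δ|_{V₁}`, `Δ|_{V₂}`, then
`π_{V₁}⁻¹(F₁) ∩ π_{V₂}⁻¹(F₂)` is facial for `Δ`; consequently, for any `T ⊆ I`,
`F_Δ(T) = π_{V₁}⁻¹(F_{Δ|V₁}(π_{V₁}(T))) ∩ π_{V₂}⁻¹(F_{Δ|V₂}(π_{V₂}(T)))`. -/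
theorem facial_glue_of_reducible {V : Type} [Fintype V] [DecidableEq V]
    {ι : V → Type} [∀ v, Fintype (ι v)] [∀ v, DecidableEq (ι v)]
    (Δ : Finset (Finset V)) (hΔ : ∀ D ∈ Δ, ∀ D' ⊆ D, D' ∈ Δ)
    (V₁ V₂ : Finset V) (hcover : V₁ ∪ V₂ = Finset.univ)
    (hsplit : Δ = Δ.filter (· ⊆ V₁) ∪ Δ.filter (· ⊆ V₂))
    (hcomplete : V₁ ∩ V₂ ∈ Δ) :
    (∀ (F₁ : Set (∀ v' : {v // v ∈ V₁}, ι v'.1)) (F₂ : Set (∀ v' : {v // v ∈ V₂}, ι v'.1)),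
      HFacial (hinduced Δ V₁) F₁ → HFacial (hinduced Δ V₂) F₂ →
      HFacial Δ (hproj V₁ ⁻¹' F₁ ∩ hproj V₂ ⁻¹' F₂)) ∧
    (∀ (T F : Set (∀ v, ι v)) (G₁ : Set (∀ v' : {v // v ∈ V₁}, ι v'.1))
        (G₂ : Set (∀ v' : {v // v ∈ V₂}, ι v'.1)),
      HSmallest Δ T F →
      HSmallest (hinduced Δ V₁) (hproj V₁ '' T) G₁ →
      HSmallest (hinduced Δ V₂) (hproj V₂ '' T) G₂ →
      F = hproj V₁ ⁻¹' G₁ ∩ hproj V₂ ⁻¹' G₂) := by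
  classical
  refine ⟨fun F₁ F₂ h1 h2 => hfacial_preimage_inter Δ V₁ V₂ F₁ F₂ h1 h2, ?_⟩
  intro T F G₁ G₂ hF hG₁ hG₂
  by_cases hne : Nonempty (∀ v, ι v)
  · have hsplit' : Δ = Δ.filter (· ⊆ V₂) ∪ Δ.filter (· ⊆ V₁) := by
      rw [Finset.union_comm]
      exact hsplit
    have hcomp' : V₂ ∩ V₁ ∈ Δ := by rwa [Finset.inter_comm]
    apply Set.Subset.antisymm
    · exact hF.2.2 _ (hfacial_preimage_inter Δ V₁ V₂ G₁ G₂ hG₁.1 hG₂.1)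
        (fun t ht => ⟨hG₁.2.1 ⟨t, ht, rfl⟩, hG₂.2.1 ⟨t, ht, rfl⟩⟩)
    · rintro i ⟨hi1, hi2⟩
      have hπ1F : HFacial (hinduced Δ V₁) (hproj V₁ '' F) :=
        proj_facial Δ V₁ V₂ hsplit hcomplete hne F hF.1
      have hπ2F : HFacial (hinduced Δ V₂) (hproj V₂ '' F) :=
        proj_facial Δ V₂ V₁ hsplit' hcomp' hne F hF.1
      have hG1sub : G₁ ⊆ hproj V₁ '' F :=
        hG₁.2.2 _ hπ1F (Set.image_mono hF.2.1)
      have hG2sub : G₂ ⊆ hproj V₂ '' F :=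
        hG₂.2.2 _ hπ2F (Set.image_mono hF.2.1)
      obtain ⟨j, hjF, hj⟩ := hG1sub hi1
      obtain ⟨k, hkF, hk⟩ := hG2sub hi2
      have hjv : ∀ v, ∀ hv : v ∈ V₁, j v = i v := fun v hv => congrFun hj ⟨v, hv⟩
      have hkv : ∀ v, ∀ hv : v ∈ V₂, k v = i v := fun v hv => congrFun hk ⟨v, hv⟩
      have hglue := glue_mem Δ V₁ V₂ hsplit F hF.1 j k hjF hkF
        (fun v hv1 hv2 => by rw [hjv v hv1, hkv v hv2])
      have heq : (fun v => if v ∈ V₁ then j v else k v) = i := by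
        funext v
        by_cases hv : v ∈ V₁
        · simp [hv, hjv v hv]
        · have hv2 : v ∈ V₂ := by
            have hu := Finset.mem_univ v
            rw [← hcover, Finset.mem_union] at hu
            tauto
          simp [hv, hkv v hv2]
      rwa [heq] at hglue
  · ext i
    exact absurd ⟨i⟩ hne
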